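/- arXiv:0910.0447 — 2 statements merged into one kernel-verified Lean document; each statement's English description precedes it below -/
import Mathlib

section
/- Two symmetry operators a, b ∈ ℂ[S_N] satisfy ⟨a u, v⟩ = ⟨u, b v⟩ for all u, v ∈ H if and only if b = (ā)* + c for some c ∈ J₀, where J₀ is the ideal of elements annihilating H. -/
open MonoidAlgebra

noncomputable section

/-- The complex group ring `ℂ[S_N]`. -/
abbrev GA (N : ℕ) : Type := MonoidAlgebra ℂ (Equiv.Perm (Fin N))

/-- The star operation `a* = Σ_p a_p p⁻¹`. -/
def starOp {N : ℕ} (a : GA N) : GA N :=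
  MonoidAlgebra.ofCoeff (Finsupp.equivMapDomain (Equiv.inv (Equiv.Perm (Fin N))) a.coeff)

/-- Coefficient-wise complex conjugation `ā = Σ_p conj(a_p) p`. -/
def conjOp {N : ℕ} (a : GA N) : GA N :=
  MonoidAlgebra.ofCoeff (Finsupp.mapRange (starRingEnd ℂ) (map_zero _) a.coeff)

/-- The Hilbert space `H` with orthonormal basis indexed by `σ : {1,…,N} → {1,…,K}`. -/
abbrev H (N K : ℕ) : Type := (Fin N → Fin K) → ℂ

/-- The basis vector `|σ⟩`. -/
def ket {N K : ℕ} (σ : Fin N → Fin K) : H N K :=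
  fun τ => if τ = σ then 1 else 0

/-- Action of `a = Σ_p a_p p ∈ ℂ[S_N]` on `w ∈ H`:
`a w = Σ_p Σ_σ a_p w_σ |σ ∘ p⁻¹⟩`; the coefficient of `aw` at `τ` is `Σ_p a_p w_{τ∘p}`. -/
def act {N K : ℕ} (a : GA N) (w : H N K) : H N K :=
  fun τ => ∑ p : Equiv.Perm (Fin N), a.coeff p * w (τ ∘ p)

/-- The inner product `⟨u, v⟩ = Σ_σ u_σ conj(v_σ)`. -/
def inn {N K : ℕ} (u v : H N K) : ℂ :=
  ∑ σ : Fin N → Fin K, u σ * (starRingEnd ℂ) (v σ)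

lemma act_add {N K : ℕ} (x y : GA N) (w : H N K) :
    act (x + y) w = act x w + act y w := by
  funext τ
  unfold act
  simp only [Pi.add_apply]
  rw [← Finset.sum_add_distrib]
  refine Finset.sum_congr rfl fun p _ => ?_
  rw [MonoidAlgebra.coeff_add, Finsupp.add_apply, add_mul]

lemma act_sub {N K : ℕ} (x y : GA N) (w : H N K) :
    act (x - y) w = act x w - act y w := by
  funext τ
  unfold act
  simp only [Pi.sub_apply]
  rw [← Finset.sum_sub_distrib]
  refine Finset.sum_congr rfl fun p _ => ?_
  rw [MonoidAlgebra.coeff_sub, Finsupp.sub_apply, sub_mul]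

lemma inn_sub_right {N K : ℕ} (u w₁ w₂ : H N K) :
    inn u (w₁ - w₂) = inn u w₁ - inn u w₂ := by
  simp [inn, mul_sub, Finset.sum_sub_distrib]

lemma inn_ket {N K : ℕ} (τ : Fin N → Fin K) (w : H N K) :
    inn (ket τ) w = (starRingEnd ℂ) (w τ) := by
  classical
  simp [inn, ket, ite_mul]

lemma starOp_conjOp_apply {N : ℕ} (a : GA N) (p : Equiv.Perm (Fin N)) :
    (starOp (conjOp a)).coeff p = (starRingEnd ℂ) (a.coeff p⁻¹) := rfl

lemma adj_key {N K : ℕ} (a : GA N) (u v : H N K) :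
    inn (act a u) v = inn u (act (starOp (conjOp a)) v) := by
  classical
  calc inn (act a u) v
      = ∑ p : Equiv.Perm (Fin N), ∑ σ : Fin N → Fin K,
          a.coeff p * u (σ ∘ p) * (starRingEnd ℂ) (v σ) := by
        unfold inn act
        rw [Finset.sum_comm]
        simp [Finset.sum_mul]
    _ = ∑ p : Equiv.Perm (Fin N), ∑ σ : Fin N → Fin K,
          a.coeff p * u σ * (starRingEnd ℂ) (v (σ ∘ ⇑p⁻¹)) := by
        refine Finset.sum_congr rfl fun p _ => ?_
        refine Fintype.sum_equiv (Equiv.arrowCongr p.symm (Equiv.refl (Fin K)))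
          _ _ fun σ => ?_
        have h1 : ((Equiv.arrowCongr p.symm (Equiv.refl (Fin K))) σ : Fin N → Fin K)
            = σ ∘ ⇑p := rfl
        rw [h1]
        have h2 : (σ ∘ ⇑p) ∘ ⇑p⁻¹ = σ := by
          funext x; simp [Function.comp]
        rw [h2]
    _ = inn u (act (starOp (conjOp a)) v) := by
        have key : inn u (act (starOp (conjOp a)) v)
            = ∑ p : Equiv.Perm (Fin N), ∑ σ : Fin N → Fin K,
                a.coeff p * u σ * (starRingEnd ℂ) (v (σ ∘ ⇑p⁻¹)) := by
          unfold inn act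
          simp only [starOp_conjOp_apply, map_sum, map_mul, Complex.conj_conj,
            Finset.mul_sum]
          rw [Finset.sum_comm]
          refine Fintype.sum_equiv (Equiv.inv (Equiv.Perm (Fin N))) _ _ fun p => ?_
          refine Finset.sum_congr rfl fun σ _ => ?_
          simp only [Equiv.inv_apply, inv_inv]
          ring
        rw [key]

/-- `⟨a u, v⟩ = ⟨u, b v⟩` for all `u, v ∈ H` iff `b = (ā)* + c` with `c ∈ J₀`. -/
theorem adjoint_iff (N K : ℕ) (a b : GA N) :
    (∀ u v : H N K, inn (act a u) v = inn u (act b v)) ↔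
      ∃ c : GA N, (∀ u : H N K, act c u = 0) ∧ b = starOp (conjOp a) + c := by
  constructor
  · intro h
    refine ⟨b - starOp (conjOp a), ?_, by abel⟩
    intro v
    funext τ
    have h0 : inn (ket τ) (act (b - starOp (conjOp a)) v) = 0 := by
      rw [act_sub, inn_sub_right, ← h (ket τ) v, adj_key, sub_self]
    rw [inn_ket] at h0
    simpa using congrArg (starRingEnd ℂ) h0
  · rintro ⟨c, hc, rfl⟩
    intro u v
    rw [adj_key a u v, act_add, hc v, add_zero]
end
end

section
/- Let R ⊂ ℂ[S_N] be a minimal right ideal not contained in the annihilator ideal J₀ of the Hilbert space H. Then R contains exactly one generating idempotent f satisfying (f̄)* = f. -/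
open MonoidAlgebra

noncomputable section

/-- the antilinear involution `a ↦ (ā)*` -/
def dag {N : ℕ} (a : GA N) : GA N := starOp (conjOp a)

lemma dag_apply {N : ℕ} (a : GA N) (q : Equiv.Perm (Fin N)) :
    (dag a).coeff q = (starRingEnd ℂ) (a.coeff q⁻¹) := rfl

lemma dag_zero {N : ℕ} : dag (0 : GA N) = 0 := by
  ext q; simp [dag_apply]

lemma dag_add {N : ℕ} (a b : GA N) : dag (a + b) = dag a + dag b := by
  ext q; rw [show ((dag a + dag b).coeff q) = (dag a).coeff q + (dag b).coeff q from rfl, dag_apply, dag_apply, dag_apply, show ((a+b).coeff q⁻¹ : ℂ) = a.coeff q⁻¹ + b.coeff q⁻¹ from rfl, map_add]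

lemma dag_smul {N : ℕ} (c : ℂ) (a : GA N) :
    dag (c • a) = (starRingEnd ℂ) c • dag a := by
  ext q; rw [show (((starRingEnd ℂ) c • dag a).coeff q) = (starRingEnd ℂ) c * (dag a).coeff q from rfl, dag_apply, dag_apply, show ((c • a).coeff q⁻¹ : ℂ) = c * a.coeff q⁻¹ from rfl, map_mul]

lemma dag_dag {N : ℕ} (a : GA N) : dag (dag a) = a := by
  ext q; simp [dag_apply]

lemma dag_single {N : ℕ} (g : Equiv.Perm (Fin N)) (c : ℂ) :
    dag (MonoidAlgebra.single g c) = MonoidAlgebra.single g⁻¹ ((starRingEnd ℂ) c) := by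
  ext q
  simp only [dag_apply, MonoidAlgebra.coeff_single, Finsupp.single_apply]
  by_cases h : g = q⁻¹
  · subst h; simp
  · rw [if_neg h, if_neg (fun hq => h (by rw [← hq, inv_inv])), map_zero]

lemma dag_mul {N : ℕ} (a b : GA N) : dag (a * b) = dag b * dag a := by
  induction a using MonoidAlgebra.induction_linear with
  | zero => simp [dag_zero]
  | add u v hu hv => rw [add_mul, dag_add, hu, hv, dag_add, mul_add]
  | single g c =>
    induction b using MonoidAlgebra.induction_linear with
    | zero => simp [dag_zero]
    | add u v hu hv => rw [mul_add, dag_add, hu, hv, dag_add, add_mul]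
    | single h d =>
      rw [MonoidAlgebra.single_mul_single, dag_single, dag_single, dag_single,
        MonoidAlgebra.single_mul_single, mul_inv_rev, map_mul, mul_comm ((starRingEnd ℂ) c)]

lemma dag_one {N : ℕ} : dag (1 : GA N) = 1 := by
  rw [show (1 : GA N) = MonoidAlgebra.single 1 1 from rfl, dag_single]; simp

lemma mul_dag_self_eq_zero {N : ℕ} {a : GA N} (h : a * dag a = 0) : a = 0 := by
  have h1 : (a * dag a).coeff 1 = 0 := by rw [h]; rfl
  rw [MonoidAlgebra.coeff_mul_apply_left, Finsupp.sum] at h1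
  have h2 : (↑(∑ p ∈ a.coeff.support, Complex.normSq (a.coeff p)) : ℂ) = 0 := by
    rw [← h1]
    push_cast
    refine Finset.sum_congr rfl fun p hp => ?_
    rw [dag_apply, mul_one, inv_inv, Complex.normSq_eq_conj_mul_self, mul_comm]
  have h3 : ∑ p ∈ a.coeff.support, Complex.normSq (a.coeff p) = 0 := by exact_mod_cast h2
  ext q
  by_cases hq : q ∈ a.coeff.support
  · have := (Finset.sum_eq_zero_iff_of_nonneg (fun p _ => Complex.normSq_nonneg _)).1 h3 q hq
    simpa [Complex.normSq_eq_zero] using this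
  · simpa using Finsupp.notMem_support_iff.1 hq

instance instGAFD {N : ℕ} : FiniteDimensional ℂ (GA N) :=
  Module.Finite.equiv ((MonoidAlgebra.coeffLinearEquiv ℂ).trans (Finsupp.linearEquivFunOnFinite ℂ ℂ (Equiv.Perm (Fin N)))).symm

theorem exists_unique_aux (N : ℕ) (R : Submodule (GA N)ᵐᵒᵖ (GA N)) (hmin : IsAtom R) :
    ∃! f : GA N, f * f = f ∧ (∀ x : GA N, x ∈ R ↔ ∃ y : GA N, x = f * y) ∧
      starOp (conjOp f) = f := by
  classical
  have hsmulC : ∀ (c : ℂ) (x : GA N), x ∈ R → c • x ∈ R := by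
    intro c x hx
    have h : c • x = x * (c • (1 : GA N)) := by rw [mul_smul_comm, mul_one]
    rw [h, ← op_smul_eq_mul]
    exact R.smul_mem _ hx
  obtain ⟨a, haR, ha0⟩ := Submodule.ne_bot_iff R |>.1 hmin.1
  set e := a * dag a with he_def
  have heR : e ∈ R := by rw [he_def, ← op_smul_eq_mul]; exact R.smul_mem _ haR
  have he0 : e ≠ 0 := fun h => ha0 (mul_dag_self_eq_zero h)
  have hdage : dag e = e := by rw [he_def, dag_mul, dag_dag]
  have hmulR : ∀ x : GA N, e * x ∈ R := fun x => by
    rw [← op_smul_eq_mul]; exact R.smul_mem _ heR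
  let Rc : Submodule ℂ (GA N) :=
    { carrier := R
      add_mem' := fun h1 h2 => R.add_mem h1 h2
      zero_mem' := R.zero_mem
      smul_mem' := fun c x hx => hsmulC c x hx }
  let L : Rc →ₗ[ℂ] Rc :=
    { toFun := fun x => ⟨e * x.1, hmulR x.1⟩
      map_add' := fun x y => Subtype.ext (mul_add e x.1 y.1)
      map_smul' := fun c x => Subtype.ext (mul_smul_comm c e x.1) }
  haveI : Nontrivial Rc := nontrivial_of_ne ⟨e, heR⟩ 0 (fun h => he0 (by
    simpa using congrArg Subtype.val h))
  obtain ⟨μ, hμ⟩ := Module.End.exists_eigenvalue L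
  obtain ⟨v, hv⟩ := hμ.exists_hasEigenvector
  have hvmem : (v : GA N) ∈ R := v.2
  have hv0 : (v : GA N) ≠ 0 := fun h => hv.2 (Subtype.ext h)
  have hveq : e * (v : GA N) = μ • (v : GA N) := congrArg Subtype.val hv.apply_eq_smul
  let S : Submodule (GA N)ᵐᵒᵖ (GA N) :=
    { carrier := {x | x ∈ R ∧ e * x = μ • x}
      add_mem' := fun hx hy => ⟨R.add_mem hx.1 hy.1, by
        rw [mul_add, hx.2, hy.2, smul_add]⟩
      zero_mem' := ⟨R.zero_mem, by simp⟩
      smul_mem' := fun c x hx => ⟨R.smul_mem c hx.1, by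
        rw [MulOpposite.smul_eq_mul_unop, ← mul_assoc, hx.2, smul_mul_assoc]⟩ }
  have hSR : S ≤ R := fun x hx => hx.1
  have hS0 : S ≠ ⊥ := by
    intro h
    apply hv0
    have hm : (v : GA N) ∈ S := ⟨hvmem, hveq⟩
    rw [h] at hm
    simpa using hm
  have hSeq : S = R := by
    rcases lt_or_eq_of_le hSR with h | h
    · exact absurd (hmin.2 S h) hS0
    · exact h
  have hact : ∀ x ∈ R, e * x = μ • x := fun x hx => (hSeq ▸ hx : x ∈ S).2
  have hee : e * e = μ • e := hact e heR
  have hμ0 : μ ≠ 0 := by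
    intro h0
    apply he0
    apply mul_dag_self_eq_zero
    rw [hdage]
    rw [h0, zero_smul] at hee
    exact hee
  have hμreal : (starRingEnd ℂ) μ = μ := by
    have h1 : dag (e * e) = e * e := by rw [dag_mul, hdage]
    rw [hee, dag_smul, hdage] at h1
    have h3 : ((starRingEnd ℂ) μ - μ) • e = 0 := by rw [sub_smul, h1, sub_self]
    rcases smul_eq_zero.1 h3 with h | h
    · exact sub_eq_zero.1 h
    · exact absurd h he0
  set f := μ⁻¹ • e with hf_def
  have hfR : f ∈ R := hsmulC _ _ heR
  have hleft : ∀ x ∈ R, f * x = x := by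
    intro x hx
    calc f * x = μ⁻¹ • (e * x) := smul_mul_assoc μ⁻¹ e x
    _ = μ⁻¹ • μ • x := by rw [hact x hx]
    _ = x := by rw [smul_smul, inv_mul_cancel₀ hμ0, one_smul]
  have hdagf : dag f = f := by
    rw [hf_def, dag_smul, hdage, map_inv₀, hμreal]
  refine ⟨f, ⟨hleft f hfR, fun x => ⟨fun hx => ⟨x, (hleft x hx).symm⟩, ?_⟩, hdagf⟩, ?_⟩
  · rintro ⟨y, rfl⟩
    rw [← op_smul_eq_mul]
    exact R.smul_mem _ hfR
  · rintro f' ⟨hidem', hmem', hsa'⟩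
    have hdagf' : dag f' = f' := hsa'
    have hf'R : f' ∈ R := (hmem' f').2 ⟨f', hidem'.symm⟩
    have hleft' : ∀ x ∈ R, f' * x = x := by
      intro x hx
      obtain ⟨y, rfl⟩ := (hmem' x).1 hx
      rw [← mul_assoc, hidem']
    have h1 : f * f' = f' := hleft f' hf'R
    have h2 : f' * f = f := hleft' f hfR
    have e1 : dag (f' * f) = f * f' := by rw [dag_mul, hdagf, hdagf']
    rw [h2, hdagf, h1] at e1
    exact e1.symm

/-- a minimal right ideal `R ⊆ ℂ[S_N]` (an atom in the lattice of right
ideals) not contained in the annihilator `J₀` of `H` contains exactly one generating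
idempotent `f` with property (S): `(f̄)* = f`. -/
theorem unique_selfadjoint_generator (N K : ℕ) (R : Submodule (GA N)ᵐᵒᵖ (GA N))
    (hmin : IsAtom R) (hnot : ¬ ∀ a ∈ R, ∀ u : H N K, act a u = 0) :
    ∃! f : GA N, f * f = f ∧ (∀ x : GA N, x ∈ R ↔ ∃ y : GA N, x = f * y) ∧
      starOp (conjOp f) = f :=
  exists_unique_aux N R hmin
end
end
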